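/- (Equivalence of the recursive and anthyphairetic definitions of the side and diameter numbers.) For every natural number n, the continued fraction expansion of the rational number (q n) / (p n) is [1; 2, 2, ..., 2] with exactly n partial denominators: its integer part is 1, its k-th partial denominator equals 2 for every k < n, and it has no partial denominator of index ≥ n (the expansion terminates after n terms). -/

import Mathlib

mutual
/-- The Pythagorean side numbers. -/
def p : ℕ → ℕ
  | 0 => 1
  | n + 1 => p n + q n
/-- The Pythagorean diameter numbers. -/
def q : ℕ → ℕ
  | 0 => 1
  | n + 1 => 2 * p n + q n
end

lemma p_pos (n : ℕ) : 0 < p n := by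
  induction n with
  | zero => simp [p]
  | succ n ih => simp [p]; omega

lemma q_pos (n : ℕ) : 0 < q n := by
  cases n with
  | zero => simp [q]
  | succ n => simp [q]; have := p_pos n; omega

lemma p_le_q (n : ℕ) : p n ≤ q n := by
  cases n with
  | zero => simp [p, q]
  | succ n => simp [p, q]; have := p_pos n; omega

lemma q_lt_two_p (n : ℕ) : q n < 2 * p n := by
  induction n with
  | zero => simp [p, q]
  | succ n ih => simp [p, q]; have := q_pos n; omega

lemma q_succ_sub (n : ℕ) : q (n+1) = p (n+1) + p n := by
  simp [p, q]; ring

lemma floor_ratio (n : ℕ) : ⌊(p (n+1) : ℚ) / (p n)⌋ = 2 := by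
  have h0 : (0:ℚ) < (p n : ℚ) := by exact_mod_cast p_pos n
  rw [Int.floor_eq_iff]
  have h1 : p n ≤ q n := p_le_q n
  have h2 : q n < 2 * p n := q_lt_two_p n
  constructor
  · rw [le_div_iff₀ h0]; push_cast; simp [p]; push_cast
    have : 2 * p n ≤ p n + q n := by omega
    exact_mod_cast this
  · rw [div_lt_iff₀ h0]; push_cast; simp [p]; push_cast
    have : p n + q n < 3 * p n := by omega
    exact_mod_cast this

lemma fract_ratio (n : ℕ) :
    Int.fract ((p (n+2) : ℚ) / (p (n+1))) = (p n : ℚ) / (p (n+1)) := by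
  have h0 : (0:ℚ) < (p (n+1) : ℚ) := by exact_mod_cast p_pos (n+1)
  rw [Int.fract, floor_ratio]
  rw [div_sub' (ne_of_gt h0)]
  congr 1
  have : p (n+2) = 2 * p (n+1) + p n := by
    have := q_succ_sub n; simp [p, q] at *; omega
  rw [this]; push_cast; ring

/-- Key lemma about the ratios p(n+1)/p n. -/
lemma aux (n : ℕ) : ∀ k,
    (GenContFract.of ((p (n+1) : ℚ) / (p n))).s.get? k
      = if k < n then some ⟨1, 2⟩ else none := by
  induction n with
  | zero =>
    intro k
    have : ((p 1 : ℚ) / (p 0)) = ((2 : ℤ) : ℚ) := by norm_num [p, q]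
    rw [this, GenContFract.of_s_of_int]
    simp
  | succ n ih =>
    intro k
    have hfr : Int.fract ((p (n+2) : ℚ) / (p (n+1))) = (p n : ℚ) / (p (n+1)) :=
      fract_ratio n
    have hinv : (Int.fract ((p (n+2) : ℚ) / (p (n+1))))⁻¹ = (p (n+1) : ℚ) / (p n) := by
      rw [hfr, inv_div]
    cases k with
    | zero =>
      have hne : Int.fract ((p (n+2) : ℚ) / (p (n+1))) ≠ 0 := by
        rw [hfr]
        have h0 : (0:ℚ) < (p n : ℚ) := by exact_mod_cast p_pos n
        have h1 : (0:ℚ) < (p (n+1) : ℚ) := by exact_mod_cast p_pos (n+1)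
        positivity
      have hh := GenContFract.of_s_head hne
      rw [hinv, floor_ratio] at hh
      simp only [Nat.succ_pos, if_pos]
      exact hh
    | succ k =>
      rw [GenContFract.of_s_succ, hinv, ih k]
      by_cases h : k < n <;> simp [h] <;> omega

lemma floor_qp (n : ℕ) : ⌊(q n : ℚ) / (p n)⌋ = 1 := by
  have h0 : (0:ℚ) < (p n : ℚ) := by exact_mod_cast p_pos n
  rw [Int.floor_eq_iff]
  constructor
  · rw [le_div_iff₀ h0]
    have : 1 * p n ≤ q n := by have := p_le_q n; omega
    exact_mod_cast this
  · rw [div_lt_iff₀ h0]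
    have := q_lt_two_p n
    push_cast
    have h2 : (q n : ℚ) < 2 * p n := by exact_mod_cast this
    linarith

lemma fract_qp (n : ℕ) :
    Int.fract ((q (n+1) : ℚ) / (p (n+1))) = (p n : ℚ) / (p (n+1)) := by
  have h0 : (0:ℚ) < (p (n+1) : ℚ) := by exact_mod_cast p_pos (n+1)
  rw [Int.fract, floor_qp, div_sub' (ne_of_gt h0)]
  congr 1
  have : q (n+1) = p (n+1) + p n := q_succ_sub n
  rw [this]; push_cast; ring

lemma main_s (n : ℕ) : ∀ k,
    (GenContFract.of ((q n : ℚ) / (p n))).s.get? k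
      = if k < n then some ⟨1, 2⟩ else none := by
  cases n with
  | zero =>
    intro k
    have : ((q 0 : ℚ) / (p 0)) = ((1 : ℤ) : ℚ) := by norm_num [p, q]
    rw [this, GenContFract.of_s_of_int]
    simp
  | succ n =>
    intro k
    have hfr := fract_qp n
    have hinv : (Int.fract ((q (n+1) : ℚ) / (p (n+1))))⁻¹ = (p (n+1) : ℚ) / (p n) := by
      rw [hfr, inv_div]
    cases k with
    | zero =>
      have hne : Int.fract ((q (n+1) : ℚ) / (p (n+1))) ≠ 0 := by
        rw [hfr]
        have h0 : (0:ℚ) < (p n : ℚ) := by exact_mod_cast p_pos n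
        have h1 : (0:ℚ) < (p (n+1) : ℚ) := by exact_mod_cast p_pos (n+1)
        positivity
      have hh := GenContFract.of_s_head hne
      rw [hinv, floor_ratio] at hh
      simp only [Nat.succ_pos, if_pos]
      exact hh
    | succ k =>
      rw [GenContFract.of_s_succ, hinv, aux n k]
      by_cases h : k < n <;> simp [h] <;> omega

/-- The continued fraction expansion of `q n / p n` is `[1; 2, 2, ..., 2]` with exactly
`n` partial denominators. -/
theorem contFrac_of_ratio (n : ℕ) :
    (GenContFract.of ((q n : ℚ) / (p n))).h = 1 ∧
    (∀ k, k < n → (GenContFract.of ((q n : ℚ) / (p n))).partDens.get? k = some 2) ∧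
    (∀ k, n ≤ k → (GenContFract.of ((q n : ℚ) / (p n))).partDens.get? k = none) := by
  refine ⟨?_, ?_, ?_⟩
  · rw [GenContFract.of_h_eq_floor, floor_qp]; norm_num
  · intro k hk
    simp only [GenContFract.partDens, Stream'.Seq.map_get?, main_s n k, if_pos hk]
    rfl
  · intro k hk
    simp only [GenContFract.partDens, Stream'.Seq.map_get?, main_s n k,
      if_neg (by omega : ¬ k < n)]
    rfl
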